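/- Let G be a median graph and A a nonempty set of vertices of G. Then the following are equivalent: (1) A is gated; (2) A is convex; (3) the subgraph of G induced by A is connected and A is locally convex, i.e., for all x, y ∈ A with d_G(x,y) = 2 one has I(x,y) ⊆ A. -/

import Mathlib

open SimpleGraph Set

/-- The metric interval `I(u,v)` in a graph `G`. -/
def gInterval {V : Type*} (G : SimpleGraph V) (u v : V) : Set V :=
  {w | G.dist u w + G.dist w v = G.dist u v}

/-- A median graph: a connected graph in which every triplet of vertices has a
unique median, i.e. a unique vertex in `I(x,y) ∩ I(y,z) ∩ I(z,x)`. -/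
def MedianGraph {V : Type*} (G : SimpleGraph V) : Prop :=
  G.Connected ∧ ∀ x y z : V,
    ∃! m : V, m ∈ gInterval G x y ∧ m ∈ gInterval G y z ∧ m ∈ gInterval G z x

/-- `G` contains an induced `d`-dimensional hypercube all of whose vertices lie in `S`. -/
def HasCubeIn {V : Type*} (G : SimpleGraph V) (d : ℕ) (S : Set V) : Prop :=
  ∃ f : Finset (Fin d) → V, Function.Injective f ∧ (∀ A, f A ∈ S) ∧
    ∀ A B : Finset (Fin d), G.Adj (f A) (f B) ↔ (symmDiff A B).card = 1

/-- `G` contains an induced `d`-dimensional hypercube `Q_d`. -/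
def HasInducedCube {V : Type*} (G : SimpleGraph V) (d : ℕ) : Prop :=
  HasCubeIn G d Set.univ

/-- A cube-free (median) graph: no induced 3-dimensional hypercube. -/
def CubeFree {V : Type*} (G : SimpleGraph V) : Prop :=
  ¬ HasInducedCube G 3

/-- `g` is a gate of `v` in the set `S`. -/
def IsGate {V : Type*} (G : SimpleGraph V) (S : Set V) (v g : V) : Prop :=
  g ∈ S ∧ ∀ u ∈ S, G.dist v u = G.dist v g + G.dist g u

/-- A set of vertices is gated if every vertex has a gate in it. -/
def Gated {V : Type*} (G : SimpleGraph V) (S : Set V) : Prop :=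
  ∀ v : V, ∃ g : V, IsGate G S v g

/-- A set of vertices is convex if it contains the interval between any two of its members. -/
def GConvex {V : Type*} (G : SimpleGraph V) (S : Set V) : Prop :=
  ∀ u ∈ S, ∀ v ∈ S, gInterval G u v ⊆ S

/-- The star `St(z)`: the set of vertices lying in some induced hypercube of `G`
containing `z`. -/
def gStar {V : Type*} (G : SimpleGraph V) (z : V) : Set V :=
  {v | ∃ (d : ℕ) (f : Finset (Fin d) → V), Function.Injective f ∧
      (∀ A B : Finset (Fin d), G.Adj (f A) (f B) ↔ (symmDiff A B).card = 1) ∧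
      (∃ A, f A = z) ∧ (∃ A, f A = v)}

/-- The fiber `F(x)` of `x` with respect to a (gated) set `H`: all vertices having `x`
as their gate in `H`. -/
def fiber {V : Type*} (G : SimpleGraph V) (H : Set V) (x : V) : Set V :=
  {v | IsGate G H v x}

/-- Two fibers are neighboring when an edge of `G` joins them. -/
def Neighboring {V : Type*} (G : SimpleGraph V) (H : Set V) (x y : V) : Prop :=
  ∃ a ∈ fiber G H x, ∃ b ∈ fiber G H y, G.Adj a b

/-- The boundary `∂_y F(x)`: vertices of `F(x)` having a neighbor in `F(y)`. -/
def bdry {V : Type*} (G : SimpleGraph V) (H : Set V) (x y : V) : Set V :=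
  {a | a ∈ fiber G H x ∧ ∃ b ∈ fiber G H y, G.Adj a b}

/-- The total boundary `∂*F(x)`: union of the boundaries `∂_y F(x)` over all `y ∈ H`
adjacent to `x`. -/
def totalBdry {V : Type*} (G : SimpleGraph V) (H : Set V) (x : V) : Set V :=
  ⋃ (y : V) (_ : y ∈ H ∧ G.Adj x y), bdry G H x y

/-- The imprint set of `u` on `A`. -/
def imprints {V : Type*} (G : SimpleGraph V) (u : V) (A : Set V) : Set V :=
  {a ∈ A | gInterval G u a ∩ A = {a}}

/-- The halfspace `W(u,v)` associated with an edge `uv`. -/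
def halfspaceW {V : Type*} (G : SimpleGraph V) (u v : V) : Set V :=
  {z | G.dist z u < G.dist z v}

section
variable {V : Type*} {G : SimpleGraph V}

lemma interval_adj (hc : G.Connected) {x y w : V} (hxy : G.Adj x y)
    (hw : w ∈ gInterval G x y) : w = x ∨ w = y := by
  have h1 : G.dist x y = 1 := dist_eq_one_iff_adj.mpr hxy
  simp only [gInterval, mem_setOf_eq, h1] at hw
  rcases Nat.add_eq_one_iff.mp hw with ⟨h, _⟩ | ⟨h, _⟩
  · exact Or.inl ((hc.dist_eq_zero_iff.mp h).symm)
  · exact Or.inr (hc.dist_eq_zero_iff.mp ‹G.dist w y = 0›)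

lemma dist_comm' {V : Type*} (G : SimpleGraph V) (a b : V) : G.dist a b = G.dist b a :=
  SimpleGraph.dist_comm

lemma no_eq_edge (hG : MedianGraph G) {u x y : V} (h : G.Adj x y) :
    G.dist u x ≠ G.dist u y := by
  obtain ⟨m, ⟨h1, h2, h3⟩, -⟩ := hG.2 x y u
  have hc := hG.1
  intro he
  have hd1 : G.dist x y = 1 := dist_eq_one_iff_adj.mpr h
  rcases interval_adj hc h h1 with hm | hm
  · have e2 : G.dist y x + G.dist x u = G.dist y u := by rw [← hm]; exact h2
    have c1 := dist_comm' G y x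
    have c2 := dist_comm' G x u
    have c3 := dist_comm' G y u
    omega
  · have e3 : G.dist u y + G.dist y x = G.dist u x := by rw [← hm]; exact h3
    have c1 := dist_comm' G y x
    omega

lemma quadrangle (hG : MedianGraph G) {u x y z : V} (hxy : x ≠ y) (hzx : G.Adj z x)
    (hzy : G.Adj z y) (hd : G.dist u x = G.dist u y) (hdz : G.dist u z = G.dist u x + 1) :
    ∃ m, G.Adj m x ∧ G.Adj m y ∧ G.dist u m + 1 = G.dist u x := by
  have hc := hG.1
  have hxy2 : G.dist x y = 2 := by
    have hle : G.dist x y ≤ 2 := by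
      have := hc.dist_triangle (u := x) (v := z) (w := y)
      have h1 : G.dist x z = 1 := dist_eq_one_iff_adj.mpr hzx.symm
      have h2 : G.dist z y = 1 := dist_eq_one_iff_adj.mpr hzy
      omega
    have hne0 : G.dist x y ≠ 0 := fun h0 => hxy (hc.dist_eq_zero_iff.mp h0)
    have hne1 : G.dist x y ≠ 1 := fun h1 => no_eq_edge hG (dist_eq_one_iff_adj.mp h1) hd
    omega
  obtain ⟨m, ⟨h1, h2, h3⟩, -⟩ := hG.2 x y u
  have hm1 : G.dist x m + G.dist m y = 2 := by rw [← hxy2]; exact h1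
  have hmx : G.dist x m ≠ 0 := by
    intro h0
    have : x = m := hc.dist_eq_zero_iff.mp h0
    subst this
    -- x ∈ I(y,u): d(y,x)+d(x,u)=d(y,u)
    have := h2
    simp only [gInterval, mem_setOf_eq] at this
    rw [dist_comm' G y x, hxy2, dist_comm' G x u, dist_comm' G y u, ← hd] at this
    omega
  have hmy : G.dist m y ≠ 0 := by
    intro h0
    have : m = y := hc.dist_eq_zero_iff.mp h0
    subst this
    have := h3
    simp only [gInterval, mem_setOf_eq] at this
    rw [dist_comm' G m x] at this
    rw [hd] at this
    omega
  have hx1 : G.dist x m = 1 := by omega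
  have hy1 : G.dist m y = 1 := by omega
  refine ⟨m, (dist_eq_one_iff_adj.mp hx1).symm, dist_eq_one_iff_adj.mp hy1, ?_⟩
  have := h3
  simp only [gInterval, mem_setOf_eq] at this
  rw [dist_comm' G m x] at this
  omega

lemma exists_neighbor_toward (hc : G.Connected) {x y : V} (h : G.dist x y ≠ 0) :
    ∃ w, G.Adj x w ∧ G.dist w y + 1 = G.dist x y := by
  obtain ⟨p, hp⟩ := (hc x y).exists_walk_length_eq_dist
  cases p with
  | nil => simp at h
  | cons hadj q =>
    rename_i w
    refine ⟨w, hadj, ?_⟩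
    have h1 : G.dist w y ≤ q.length := dist_le q
    have h2 : G.dist x y ≤ G.dist x w + G.dist w y := hc.dist_triangle
    have h3 : G.dist x w = 1 := dist_eq_one_iff_adj.mpr hadj
    simp [Walk.length_cons] at hp
    omega

end

section
variable {V : Type*} {G : SimpleGraph V} {A : Set V}

lemma support_mem_interval (hc : G.Connected) {x y : V} (p : G.Walk x y)
    (hp : p.length = G.dist x y) {w : V} (hw : w ∈ p.support) :
    G.dist x w + G.dist w y = G.dist x y := by
  haveI := Classical.decEq V
  have hsplit := p.take_spec hw
  have hlen : (p.takeUntil w hw).length + (p.dropUntil w hw).length = p.length := by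
    rw [← Walk.length_append, hsplit]
  have h1 : G.dist x w ≤ (p.takeUntil w hw).length := SimpleGraph.dist_le _
  have h2 : G.dist w y ≤ (p.dropUntil w hw).length := SimpleGraph.dist_le _
  have h3 : G.dist x y ≤ G.dist x w + G.dist w y := hc.dist_triangle
  omega

lemma reachable_induce_of_walk : ∀ {x y : V} (p : G.Walk x y)
    (h : ∀ w ∈ p.support, w ∈ A),
    (G.induce A).Reachable ⟨x, h x p.start_mem_support⟩ ⟨y, h y p.end_mem_support⟩ := by
  intro x y p
  induction p with
  | nil => intro h; rfl
  | cons hadj q ih =>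
    intro h
    rename_i u v w
    have hq : ∀ z ∈ q.support, z ∈ A := fun z hz => h z (by simp [hz])
    have h1 : (G.induce A).Adj ⟨u, h u (by simp)⟩ ⟨v, hq v q.start_mem_support⟩ := by
      simpa using hadj
    exact h1.reachable.trans (ih hq)

lemma dist_le_induce_dist (hA : (G.induce A).Connected) (x y : A) :
    G.dist x y ≤ (G.induce A).dist x y := by
  obtain ⟨p, hp⟩ := (hA x y).exists_walk_length_eq_dist
  have := SimpleGraph.dist_le (p.map (SimpleGraph.Embedding.induce A).toHom)
  rwa [Walk.length_map, hp] at this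

end

section
variable {V : Type*} {G : SimpleGraph V} {A : Set V}

lemma exists_prev (hA : (G.induce A).Connected) {x y : A} {n : ℕ}
    (hn : (G.induce A).dist x y = n) (hpos : 0 < n) :
    ∃ a : A, G.Adj ↑a ↑y ∧ (G.induce A).dist x a + 1 = n := by
  have h0 : (G.induce A).dist y x ≠ 0 := by
    rw [dist_comm' (G.induce A) y x, hn]; omega
  obtain ⟨w, hadj, hd⟩ := exists_neighbor_toward hA h0
  refine ⟨w, by simpa using hadj.symm, ?_⟩
  rw [dist_comm' (G.induce A) x w, dist_comm' (G.induce A) x y] at *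
  omega

lemma isometric (hG : MedianGraph G) (hA : (G.induce A).Connected)
    (hlc : ∀ x ∈ A, ∀ y ∈ A, G.dist x y = 2 → gInterval G x y ⊆ A) :
    ∀ n : ℕ, ∀ x y : A, (G.induce A).dist x y = n → G.dist ↑x ↑y = n := by
  have hc := hG.1
  intro n
  induction n using Nat.strong_induction_on with
  | _ n IH =>
  intro x y hn
  have hle : G.dist ↑x ↑y ≤ n := hn ▸ dist_le_induce_dist hA x y
  rcases Nat.eq_zero_or_pos n with h0 | hpos
  · subst h0
    have hxy : x = y := hA.dist_eq_zero_iff.mp hn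
    subst hxy
    simp
  obtain ⟨a, hGay, haD⟩ := exists_prev hA hn hpos
  have hda : G.dist ↑x ↑a = n - 1 := IH (n - 1) (by omega) x a (by omega)
  have hne : G.dist ↑x ↑a ≠ G.dist ↑x ↑y := no_eq_edge hG hGay
  have hya : G.dist ↑y ↑a = 1 := dist_eq_one_iff_adj.mpr hGay.symm
  have htri : G.dist ↑x ↑a ≤ G.dist ↑x ↑y + 1 := by
    have := hc.dist_triangle (u := (↑x : V)) (v := ↑y) (w := ↑a)
    omega
  by_contra hne2
  have hn2 : 2 ≤ n := by omega
  have hxy : G.dist ↑x ↑y = n - 2 := by omega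
  -- get b, the vertex before a
  obtain ⟨b, hGba, hbD⟩ := exists_prev hA (show (G.induce A).dist x a = n - 1 by omega)
    (by omega)
  have hdb : G.dist ↑x ↑b = n - 2 := IH (n - 2) (by omega) x b (by omega)
  have hby : (↑b : V) ≠ ↑y := by
    intro h
    have hb : b = y := Subtype.ext h
    rw [hb] at hbD
    omega
  obtain ⟨m, hmb, hmy, hmd⟩ := quadrangle hG hby hGba.symm hGay
    (show G.dist ↑x ↑b = G.dist ↑x ↑y by omega)
    (show G.dist ↑x ↑a = G.dist ↑x ↑b + 1 by omega)
  have hby2 : G.dist ↑b ↑y = 2 := by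
    have ht : G.dist ↑b ↑y ≤ G.dist ↑b ↑a + G.dist ↑a ↑y := hc.dist_triangle
    have h1 : G.dist ↑b ↑a = 1 := dist_eq_one_iff_adj.mpr hGba
    have h2 : G.dist ↑a ↑y = 1 := by rw [dist_comm' G ↑a ↑y]; omega
    have h0 : G.dist ↑b ↑y ≠ 0 := fun h => hby (hc.dist_eq_zero_iff.mp h)
    have hne1 : G.dist ↑b ↑y ≠ 1 := by
      intro h1'
      have := no_eq_edge hG (u := ↑x) (dist_eq_one_iff_adj.mp h1')
      omega
    omega
  have hmA : m ∈ A := by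
    apply hlc ↑b b.2 ↑y y.2 hby2
    have h1 : G.dist ↑b m = 1 := by
      rw [dist_comm' G ↑b m]; exact dist_eq_one_iff_adj.mpr hmb
    have h2 : G.dist m ↑y = 1 := dist_eq_one_iff_adj.mpr hmy
    simp only [gInterval, mem_setOf_eq]
    omega
  set M : A := ⟨m, hmA⟩ with hM
  have hadjMb : (G.induce A).Adj M b := by simpa using hmb
  have hadjMy : (G.induce A).Adj M y := by simpa using hmy
  have hdAM : (G.induce A).dist x M ≤ n - 1 := by
    have ht : (G.induce A).dist x M ≤ (G.induce A).dist x b + (G.induce A).dist b M :=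
      hA.dist_triangle
    have h1 : (G.induce A).dist b M = 1 := dist_eq_one_iff_adj.mpr hadjMb.symm
    omega
  have hGM : G.dist ↑x m = (G.induce A).dist x M :=
    IH ((G.induce A).dist x M) (by omega) x M rfl
  have hAy : (G.induce A).dist x y ≤ (G.induce A).dist x M + 1 := by
    have ht : (G.induce A).dist x y ≤ (G.induce A).dist x M + (G.induce A).dist M y :=
      hA.dist_triangle
    have h1 : (G.induce A).dist M y = 1 := dist_eq_one_iff_adj.mpr hadjMy
    omega
  omega

end

section
variable {V : Type*} {G : SimpleGraph V} {A : Set V}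

lemma exists_prev_A (hG : MedianGraph G) (hA : (G.induce A).Connected)
    (hlc : ∀ x ∈ A, ∀ y ∈ A, G.dist x y = 2 → gInterval G x y ⊆ A)
    {x y : V} (hx : x ∈ A) (hy : y ∈ A) (hne : x ≠ y) :
    ∃ a ∈ A, G.Adj a y ∧ G.dist x a + 1 = G.dist x y := by
  set X : A := ⟨x, hx⟩
  set Y : A := ⟨y, hy⟩
  have hd0 : 0 < (G.induce A).dist X Y := by
    rcases Nat.eq_zero_or_pos ((G.induce A).dist X Y) with h | h
    · exact absurd (congrArg Subtype.val (hA.dist_eq_zero_iff.mp h)) hne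
    · exact h
  obtain ⟨a, hadj, haD⟩ := exists_prev hA rfl hd0
  refine ⟨↑a, a.2, hadj, ?_⟩
  have h1 : G.dist x ↑a = (G.induce A).dist X a :=
    isometric hG hA hlc ((G.induce A).dist X a) X a rfl
  have h2 : G.dist x y = (G.induce A).dist X Y :=
    isometric hG hA hlc ((G.induce A).dist X Y) X Y rfl
  omega

lemma locally_convex_convex (hG : MedianGraph G) (hA : (G.induce A).Connected)
    (hlc : ∀ x ∈ A, ∀ y ∈ A, G.dist x y = 2 → gInterval G x y ⊆ A) :
    ∀ k : ℕ, ∀ x ∈ A, ∀ y ∈ A, G.dist x y = k → gInterval G x y ⊆ A := by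
  have hc := hG.1
  intro k
  induction k using Nat.strong_induction_on with
  | _ k IH =>
  intro x hx y hy hk
  have inner : ∀ c : ℕ, ∀ w ∈ gInterval G x y, G.dist w y = c → w ∈ A := by
    intro c
    induction c using Nat.strong_induction_on with
    | _ c IHc =>
    intro w hw hcw
    have hw' : G.dist x w + G.dist w y = k := by rw [← hk]; exact hw
    rcases Nat.eq_zero_or_pos c with h0 | hcpos
    · have : w = y := hc.dist_eq_zero_iff.mp (by omega)
      exact this ▸ hy
    rcases Nat.lt_or_ge c 2 with hc1 | hc2
    · -- c = 1
      have hc1' : c = 1 := by omega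
      rcases Nat.lt_or_ge k 2 with hk1 | hk2
      · -- k = 1 (k = 0 impossible since c ≤ k)
        have hk1' : k = 1 := by omega
        have hadjxy : G.Adj x y := dist_eq_one_iff_adj.mp (by omega)
        rcases interval_adj hc hadjxy hw with rfl | rfl
        · exact hx
        · exact hy
      · -- k ≥ 2
        have hne : x ≠ y := fun h => by
          rw [h, SimpleGraph.dist_self] at hk; omega
        obtain ⟨a, haA, hGay, haD⟩ := exists_prev_A hG hA hlc hx hy hne
        by_cases hwa : w = a
        · exact hwa ▸ haA
        have hadjyw : G.Adj y w := (dist_eq_one_iff_adj.mp (by omega)).symm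
        obtain ⟨m, hmw, hma, hmd⟩ := quadrangle hG hwa hadjyw hGay.symm
          (show G.dist x w = G.dist x a by omega)
          (show G.dist x y = G.dist x w + 1 by omega)
        have hma1 : G.dist m a = 1 := dist_eq_one_iff_adj.mpr hma
        have hmw1 : G.dist m w = 1 := dist_eq_one_iff_adj.mpr hmw
        have hmA : m ∈ A := by
          apply IH (k - 1) (by omega) x hx a haA (by omega)
          simp only [gInterval, mem_setOf_eq]
          omega
        have hmy2 : G.dist m y = 2 := by
          have ht : G.dist m y ≤ G.dist m w + G.dist w y := hc.dist_triangle
          have h0 : G.dist m y ≠ 0 := by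
            intro h
            have : m = y := hc.dist_eq_zero_iff.mp h
            rw [this] at hmd
            omega
          have h1 : G.dist m y ≠ 1 := by
            intro h1
            have ht2 : G.dist x y ≤ G.dist x m + G.dist m y := hc.dist_triangle
            omega
          omega
        apply hlc m hmA y hy hmy2
        simp only [gInterval, mem_setOf_eq]
        omega
    · -- c ≥ 2
      obtain ⟨w', hadj, hd'⟩ := exists_neighbor_toward hc (show G.dist w y ≠ 0 by omega)
      have hww' : G.dist w w' = 1 := dist_eq_one_iff_adj.mpr hadj
      have ht1 : G.dist x w' ≤ G.dist x w + G.dist w w' := hc.dist_triangle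
      have ht2 : G.dist x y ≤ G.dist x w' + G.dist w' y := hc.dist_triangle
      have hw'mem : w' ∈ gInterval G x y := by
        simp only [gInterval, mem_setOf_eq]
        omega
      have hw'A : w' ∈ A := IHc (c - 1) (by omega) w' hw'mem (by omega)
      apply IH (k - c + 1) (by omega) x hx w' hw'A (by omega)
      simp only [gInterval, mem_setOf_eq]
      omega
  intro w hw
  exact inner (G.dist w y) w hw rfl

end

section
variable {V : Type*} {G : SimpleGraph V} {A : Set V}

lemma gated_convex (hc : G.Connected) (h : Gated G A) : GConvex G A := by
  intro u hu v hv w hw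
  obtain ⟨g, hgA, hgd⟩ := h w
  have h1 := hgd u hu
  have h2 := hgd v hv
  have hw' : G.dist u w + G.dist w v = G.dist u v := hw
  have c1 := dist_comm' G u w
  have c2 := dist_comm' G u g
  have ht : G.dist u v ≤ G.dist u g + G.dist g v := hc.dist_triangle
  have h0 : G.dist w g = 0 := by omega
  rwa [hc.dist_eq_zero_iff.mp h0]

lemma convex_gated (hG : MedianGraph G) (hA : A.Nonempty) (h : GConvex G A) : Gated G A := by
  intro v
  set S : Set ℕ := {n | ∃ a ∈ A, G.dist v a = n} with hS
  obtain ⟨a0, ha0⟩ := hA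
  have hSne : S.Nonempty := ⟨G.dist v a0, a0, ha0, rfl⟩
  obtain ⟨g, hgA, hgd⟩ : ∃ a ∈ A, G.dist v a = sInf S := Nat.sInf_mem hSne
  refine ⟨g, hgA, fun u hu => ?_⟩
  obtain ⟨m, ⟨h1, h2, h3⟩, -⟩ := hG.2 v g u
  have hmA : m ∈ A := h g hgA u hu h2
  have hmin : sInf S ≤ G.dist v m := Nat.sInf_le ⟨m, hmA, rfl⟩
  have h1' : G.dist v m + G.dist m g = G.dist v g := h1
  have h0 : G.dist m g = 0 := by omega
  have hmg : m = g := hG.1.dist_eq_zero_iff.mp h0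
  have h3' : G.dist u m + G.dist m v = G.dist u v := h3
  subst hmg
  have c1 := dist_comm' G u m
  have c2 := dist_comm' G u v
  have c3 := dist_comm' G m v
  omega

lemma convex_connected (hc : G.Connected) (hA : A.Nonempty) (h : GConvex G A) :
    (G.induce A).Connected := by
  haveI : Nonempty A := hA.to_subtype
  rw [connected_iff]
  refine ⟨fun u v => ?_, inferInstance⟩
  obtain ⟨p, hp⟩ := (hc ↑u ↑v).exists_walk_length_eq_dist
  have hsupp : ∀ w ∈ p.support, w ∈ A := fun w hw =>
    h ↑u u.2 ↑v v.2 (support_mem_interval hc p hp hw)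
  have hr := reachable_induce_of_walk p hsupp
  convert hr using 2

end

/-- In a median graph, a nonempty set of vertices is gated iff it is convex iff it
induces a connected subgraph and is locally convex. -/
theorem gated_iff_convex_iff_locally_convex {V : Type*} (G : SimpleGraph V)
    (hG : MedianGraph G) (A : Set V) (hA : A.Nonempty) :
    (Gated G A ↔ GConvex G A) ∧
    (GConvex G A ↔ ((G.induce A).Connected ∧
      ∀ x ∈ A, ∀ y ∈ A, G.dist x y = 2 → gInterval G x y ⊆ A)) := by
  refine ⟨⟨fun hg => gated_convex hG.1 hg, fun hcv => convex_gated hG hA hcv⟩,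
    ⟨fun hcv => ⟨convex_connected hG.1 hA hcv, fun x hx y hy _ => hcv x hx y hy⟩,
     fun h u hu v hv => locally_convex_convex hG h.1 h.2 (G.dist u v) u hu v hv rfl⟩⟩
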